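/- (Mistake bound for PRIL, ideal case.) Let R² = max_{t∈[T]} ‖x^t‖² and c = min_{t∈[T]} (y_r^t − y_l^t). Suppose there exist γ > 0, w* ∈ ℝ^d and θ* ∈ ℝ^{K−1} with ‖w*‖² + Σ_{i=1}^{K−1}(θ_i*)² = 1 such that z_i^t(w*·x^t − θ_i*) ≥ γ for all i ∈ Ī^t and all t ∈ [T]. Then Σ_{t=1}^T L_I^{MAE}(w^t·x^t, θ^t, y_l^t, y_r^t) ≤ (R² + 1)(K − c − 1)/γ². -/

import Mathlib

open Finset

noncomputable def dotp {d : ℕ} (w x : Fin d → ℝ) : ℝ := ∑ i, w i * x i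

noncomputable def zval (yl : ℕ) (i : ℕ) : ℝ := if i < yl then 1 else -1

def Ibar (K yl yr : ℕ) : Finset ℕ := Finset.Icc 1 (yl - 1) ∪ Finset.Icc yr (K - 1)

noncomputable def tau {d : ℕ} (K yl yr : ℕ) (x w : Fin d → ℝ) (θ : ℕ → ℝ) (i : ℕ) : ℝ :=
  if i ∈ Ibar K yl yr ∧ zval yl i * (dotp w x - θ i) ≤ 0 then zval yl i else 0

noncomputable def LMAE (K : ℕ) (f : ℝ) (θ : ℕ → ℝ) (yl yr : ℕ) : ℝ :=
  (∑ i ∈ Finset.Icc 1 (yl - 1), if f < θ i then (1:ℝ) else 0) +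
  (∑ i ∈ Finset.Icc yr (K - 1), if θ i ≤ f then (1:ℝ) else 0)

noncomputable def LIMC (K : ℕ) (f : ℝ) (yl yr : ℕ) (θ : ℕ → ℝ) : ℝ :=
  (∑ i ∈ Finset.Icc 1 (yl - 1), max 0 (θ i - f)) +
  (∑ i ∈ Finset.Icc yr (K - 1), max 0 (f - θ i))

noncomputable def mcount {d : ℕ} (K yl yr : ℕ) (x w : Fin d → ℝ) (θ : ℕ → ℝ) : ℕ :=
  ((Ibar K yl yr).filter (fun i => zval yl i * (dotp w x - θ i) ≤ 0)).card

/- ### Auxiliary definitions and lemmas -/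

noncomputable def mval {d : ℕ} (K yl yr : ℕ) (x w : Fin d → ℝ) (θ : ℕ → ℝ) : ℝ :=
  ∑ i ∈ Finset.Icc 1 (K-1), (tau K yl yr x w θ i)^2

noncomputable def phiF {d : ℕ} (K : ℕ) (wn : Fin d → ℝ) (θn : ℕ → ℝ)
    (ws : Fin d → ℝ) (θs : ℕ → ℝ) : ℝ :=
  dotp wn ws + ∑ i ∈ Finset.Icc 1 (K-1), θn i * θs i

noncomputable def psiF {d : ℕ} (K : ℕ) (wn : Fin d → ℝ) (θn : ℕ → ℝ) : ℝ :=
  (∑ j, (wn j)^2) + ∑ i ∈ Finset.Icc 1 (K-1), (θn i)^2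

lemma zval_sq (yl i : ℕ) : zval yl i ^ 2 = 1 := by unfold zval; split_ifs <;> norm_num

lemma dotp_comm {d : ℕ} (w x : Fin d → ℝ) : dotp w x = dotp x w := by
  unfold dotp; exact Finset.sum_congr rfl fun i _ => mul_comm _ _

lemma dotp_add_smul {d : ℕ} (w x c : Fin d → ℝ) (s : ℝ) :
    dotp (w + s • x) c = dotp w c + s * dotp x c := by
  unfold dotp
  rw [Finset.mul_sum, ← Finset.sum_add_distrib]
  exact Finset.sum_congr rfl fun i _ => by simp [Pi.add_apply]; ring

lemma sumsq_add_smul {d : ℕ} (w x : Fin d → ℝ) (s : ℝ) :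
    ∑ j, ((w + s • x) j) ^ 2
      = (∑ j, (w j)^2) + 2 * s * dotp w x + s^2 * ∑ j, (x j)^2 := by
  unfold dotp
  rw [Finset.mul_sum, Finset.mul_sum, ← Finset.sum_add_distrib, ← Finset.sum_add_distrib]
  exact Finset.sum_congr rfl fun i _ => by simp [Pi.add_apply]; ring

section tauprops
variable {d : ℕ} (K yl yr : ℕ) (x w : Fin d → ℝ) (θ : ℕ → ℝ)

lemma tau_margin (γ : ℝ) (ws : Fin d → ℝ) (θs : ℕ → ℝ)
    (hm : ∀ i ∈ Ibar K yl yr, γ ≤ zval yl i * (dotp ws x - θs i)) (i : ℕ) :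
    γ * (tau K yl yr x w θ i)^2 ≤ tau K yl yr x w θ i * (dotp ws x - θs i) := by
  unfold tau
  split_ifs with h
  · have := hm i h.1
    rw [zval_sq, mul_one]
    linarith
  · simp

lemma tau_nonpos (i : ℕ) : tau K yl yr x w θ i * (dotp w x - θ i) ≤ 0 := by
  unfold tau
  split_ifs with h
  · exact h.2
  · simp

lemma abs_tau (i : ℕ) : |tau K yl yr x w θ i| = (tau K yl yr x w θ i)^2 := by
  unfold tau
  split_ifs with h
  · rw [zval_sq]; unfold zval; split_ifs <;> norm_num
  · simp

lemma tau_sq_le (i : ℕ) :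
    (tau K yl yr x w θ i)^2 ≤ if i ∈ Ibar K yl yr then (1:ℝ) else 0 := by
  unfold tau
  split_ifs with h h2 h3
  · rw [zval_sq]
  · exact absurd h.1 h2
  · simp [zval_sq]
  · simp

/-- LMAE is bounded by the mistake indicator sum. -/
lemma lmae_le_mval (hyl : 1 ≤ yl) (hylr : yl ≤ yr) (hyrK : yr ≤ K) :
    LMAE K (dotp w x) θ yl yr ≤ mval K yl yr x w θ := by
  have h1 : ∀ i ∈ Finset.Icc 1 (yl - 1),
      (if dotp w x < θ i then (1:ℝ) else 0) ≤ (tau K yl yr x w θ i)^2 := by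
    intro i hi
    rw [Finset.mem_Icc] at hi
    split_ifs with hf
    · have hIb : i ∈ Ibar K yl yr := by
        unfold Ibar; rw [Finset.mem_union, Finset.mem_Icc]; exact Or.inl ⟨hi.1, hi.2⟩
      have hz : zval yl i = 1 := by unfold zval; rw [if_pos (by omega)]
      unfold tau
      rw [if_pos ⟨hIb, by rw [hz]; linarith⟩, hz]
      norm_num
    · exact sq_nonneg _
  have h2 : ∀ i ∈ Finset.Icc yr (K - 1),
      (if θ i ≤ dotp w x then (1:ℝ) else 0) ≤ (tau K yl yr x w θ i)^2 := by
    intro i hi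
    rw [Finset.mem_Icc] at hi
    split_ifs with hf
    · have hIb : i ∈ Ibar K yl yr := by
        unfold Ibar; rw [Finset.mem_union]; exact Or.inr (Finset.mem_Icc.mpr ⟨hi.1, hi.2⟩)
      have hz : zval yl i = -1 := by unfold zval; rw [if_neg (by omega)]
      unfold tau
      rw [if_pos ⟨hIb, by rw [hz]; linarith⟩, hz]
      norm_num
    · exact sq_nonneg _
  have hdisj : Disjoint (Finset.Icc 1 (yl - 1)) (Finset.Icc yr (K - 1)) := by
    rw [Finset.disjoint_left]
    intro a ha hb
    rw [Finset.mem_Icc] at ha hb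
    omega
  have hsub : Ibar K yl yr ⊆ Finset.Icc 1 (K-1) := by
    intro a ha
    unfold Ibar at ha
    rw [Finset.mem_union, Finset.mem_Icc, Finset.mem_Icc] at ha
    rw [Finset.mem_Icc]
    omega
  calc LMAE K (dotp w x) θ yl yr
      ≤ (∑ i ∈ Finset.Icc 1 (yl - 1), (tau K yl yr x w θ i)^2)
        + ∑ i ∈ Finset.Icc yr (K - 1), (tau K yl yr x w θ i)^2 :=
        add_le_add (Finset.sum_le_sum h1) (Finset.sum_le_sum h2)
    _ = ∑ i ∈ Ibar K yl yr, (tau K yl yr x w θ i)^2 := (Finset.sum_union hdisj).symm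
    _ ≤ mval K yl yr x w θ :=
        Finset.sum_le_sum_of_subset_of_nonneg hsub (fun i _ _ => sq_nonneg _)

end tauprops

/-- Mistake bound for PRIL, ideal case. -/
theorem pril_mistake_bound_ideal
    {d K T : ℕ} (hd : 1 ≤ d) (hK : 2 ≤ K) (hT : 1 ≤ T)
    (x : ℕ → Fin d → ℝ) (yl yr : ℕ → ℕ)
    (hy : ∀ t ∈ Finset.Icc 1 T, 1 ≤ yl t ∧ yl t ≤ yr t ∧ yr t ≤ K)
    (w : ℕ → Fin d → ℝ) (θ : ℕ → ℕ → ℝ)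
    (hw1 : w 1 = 0) (hθ1 : ∀ i, θ 1 i = 0)
    (hwrec : ∀ t ∈ Finset.Icc 1 T,
      w (t+1) = w t + (∑ i ∈ Finset.Icc 1 (K-1),
        tau K (yl t) (yr t) (x t) (w t) (θ t) i) • x t)
    (hθrec : ∀ t ∈ Finset.Icc 1 T, ∀ i,
      θ (t+1) i = θ t i - tau K (yl t) (yr t) (x t) (w t) (θ t) i)
    (R2 : ℝ)
    (hR2 : R2 = (Finset.Icc 1 T).sup' (Finset.nonempty_Icc.mpr hT)
      (fun t => ∑ i, (x t i) ^ 2))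
    (c : ℕ)
    (hc : c = (Finset.Icc 1 T).inf' (Finset.nonempty_Icc.mpr hT)
      (fun t => yr t - yl t))
    (γ : ℝ) (hγ : 0 < γ)
    (ws : Fin d → ℝ) (θs : ℕ → ℝ)
    (hnorm : (∑ i, ws i ^ 2) + (∑ i ∈ Finset.Icc 1 (K-1), θs i ^ 2) = 1)
    (hmargin : ∀ t ∈ Finset.Icc 1 T, ∀ i ∈ Ibar K (yl t) (yr t),
      γ ≤ zval (yl t) i * (dotp ws (x t) - θs i)) :
    ∑ t ∈ Finset.Icc 1 T, LMAE K (dotp (w t) (x t)) (θ t) (yl t) (yr t)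
      ≤ (R2 + 1) * ((K : ℝ) - (c : ℝ) - 1) / γ ^ 2 := by
  set m : ℕ → ℝ := fun t => mval K (yl t) (yr t) (x t) (w t) (θ t) with hm
  -- basic facts
  have h1T : (1 : ℕ) ∈ Finset.Icc 1 T := Finset.mem_Icc.mpr ⟨le_refl 1, hT⟩
  have hR2nonneg : 0 ≤ R2 := by
    rw [hR2]
    calc (0:ℝ) ≤ ∑ i, (x 1 i)^2 := Finset.sum_nonneg fun i _ => sq_nonneg _
      _ ≤ _ := Finset.le_sup' (fun t => ∑ i, (x t i) ^ 2) h1T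
  have hmnonneg : ∀ t, 0 ≤ m t := fun t => Finset.sum_nonneg fun i _ => sq_nonneg _
  have hcK : c + 1 ≤ K := by
    have hcle : c ≤ yr 1 - yl 1 := hc ▸ Finset.inf'_le _ h1T
    have := hy 1 h1T
    omega
  have hcast : ((K - 1 - c : ℕ) : ℝ) = (K:ℝ) - (c:ℝ) - 1 := by
    have h : K - 1 - c = K - (c + 1) := by omega
    rw [h, Nat.cast_sub hcK]
    push_cast
    ring
  -- m t is at most the cardinality bound
  have hmle : ∀ t ∈ Finset.Icc 1 T, m t ≤ ((K - 1 - c : ℕ) : ℝ) := by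
    intro t ht
    obtain ⟨hyl, hylr, hyrK⟩ := hy t ht
    have h1 : m t ≤ ∑ i ∈ Finset.Icc 1 (K-1),
        (if i ∈ Ibar K (yl t) (yr t) then (1:ℝ) else 0) :=
      Finset.sum_le_sum fun i _ => tau_sq_le K (yl t) (yr t) (x t) (w t) (θ t) i
    rw [Finset.sum_boole] at h1
    have h2 : ((Finset.Icc 1 (K-1)).filter (fun i => i ∈ Ibar K (yl t) (yr t))).card
        ≤ (Ibar K (yl t) (yr t)).card :=
      Finset.card_le_card fun i hi => (Finset.mem_filter.mp hi).2
    have h3 : (Ibar K (yl t) (yr t)).card ≤ K - 1 - c := by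
      have hcle : c ≤ yr t - yl t := hc ▸ Finset.inf'_le _ ht
      calc (Ibar K (yl t) (yr t)).card
          ≤ (Finset.Icc 1 (yl t - 1)).card + (Finset.Icc (yr t) (K - 1)).card :=
            Finset.card_union_le _ _
        _ ≤ K - 1 - c := by rw [Nat.card_Icc, Nat.card_Icc]; omega
    calc m t ≤ _ := h1
      _ ≤ ((K - 1 - c : ℕ) : ℝ) := by exact_mod_cast le_trans h2 h3
  have hmle' : ∀ t ∈ Finset.Icc 1 T, m t ≤ (K:ℝ) - (c:ℝ) - 1 := fun t ht =>
    hcast ▸ hmle t ht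
  -- per-trial step
  have step : ∀ t ∈ Finset.Icc 1 T,
      γ * m t + phiF K (w t) (θ t) ws θs ≤ phiF K (w (t+1)) (θ (t+1)) ws θs ∧
      psiF K (w (t+1)) (θ (t+1)) ≤ psiF K (w t) (θ t) + (m t)^2 * R2 + m t := by
    intro t ht
    have hw := hwrec t ht
    have hθ := hθrec t ht
    set τ : ℕ → ℝ := tau K (yl t) (yr t) (x t) (w t) (θ t) with hτ
    set s : ℝ := ∑ i ∈ Finset.Icc 1 (K-1), τ i with hs
    constructor
    · -- progress
      have hΦ : phiF K (w (t+1)) (θ (t+1)) ws θs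
          = phiF K (w t) (θ t) ws θs
            + ∑ i ∈ Finset.Icc 1 (K-1), τ i * (dotp ws (x t) - θs i) := by
        unfold phiF
        rw [hw, dotp_add_smul, dotp_comm (x t) ws]
        have hθsum : ∑ i ∈ Finset.Icc 1 (K-1), θ (t+1) i * θs i
            = (∑ i ∈ Finset.Icc 1 (K-1), θ t i * θs i)
              - ∑ i ∈ Finset.Icc 1 (K-1), τ i * θs i := by
          rw [← Finset.sum_sub_distrib]
          exact Finset.sum_congr rfl fun i _ => by rw [hθ i]; ring
        have hexp : ∑ i ∈ Finset.Icc 1 (K-1), τ i * (dotp ws (x t) - θs i)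
            = s * dotp ws (x t) - ∑ i ∈ Finset.Icc 1 (K-1), τ i * θs i := by
          rw [hs, Finset.sum_mul, ← Finset.sum_sub_distrib]
          exact Finset.sum_congr rfl fun i _ => by ring
        rw [hθsum, hexp]
        ring
      rw [hΦ]
      have hsum : γ * m t ≤ ∑ i ∈ Finset.Icc 1 (K-1), τ i * (dotp ws (x t) - θs i) := by
        rw [hm]
        simp only [mval, Finset.mul_sum]
        exact Finset.sum_le_sum fun i _ =>
          tau_margin K (yl t) (yr t) (x t) (w t) (θ t) γ ws θs (hmargin t ht) i
      linarith
    · -- norm bound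
      have hΨ : psiF K (w (t+1)) (θ (t+1))
          = psiF K (w t) (θ t)
            + 2 * (∑ i ∈ Finset.Icc 1 (K-1), τ i * (dotp (w t) (x t) - θ t i))
            + s^2 * (∑ j, (x t j)^2) + m t := by
        unfold psiF
        rw [hw, sumsq_add_smul]
        have hθsum : ∑ i ∈ Finset.Icc 1 (K-1), (θ (t+1) i)^2
            = (∑ i ∈ Finset.Icc 1 (K-1), (θ t i)^2)
              - 2 * (∑ i ∈ Finset.Icc 1 (K-1), τ i * θ t i) + m t := by
          rw [hm]
          simp only [mval, Finset.mul_sum, ← hτ, ← Finset.sum_sub_distrib,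
            ← Finset.sum_add_distrib]
          exact Finset.sum_congr rfl fun i _ => by rw [hθ i]; ring
        have hexp : ∑ i ∈ Finset.Icc 1 (K-1), τ i * (dotp (w t) (x t) - θ t i)
            = s * dotp (w t) (x t) - ∑ i ∈ Finset.Icc 1 (K-1), τ i * θ t i := by
          rw [hs, Finset.sum_mul, ← Finset.sum_sub_distrib]
          exact Finset.sum_congr rfl fun i _ => by ring
        rw [hθsum, hexp]
        ring
      rw [hΨ]
      have hE : ∑ i ∈ Finset.Icc 1 (K-1), τ i * (dotp (w t) (x t) - θ t i) ≤ 0 :=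
        Finset.sum_nonpos fun i _ => tau_nonpos K (yl t) (yr t) (x t) (w t) (θ t) i
      have habs : |s| ≤ m t := by
        rw [hs, hm]
        calc |∑ i ∈ Finset.Icc 1 (K-1), τ i| ≤ ∑ i ∈ Finset.Icc 1 (K-1), |τ i| :=
            Finset.abs_sum_le_sum_abs _ _
          _ = mval K (yl t) (yr t) (x t) (w t) (θ t) :=
            Finset.sum_congr rfl fun i _ => abs_tau K (yl t) (yr t) (x t) (w t) (θ t) i
      have hs2 : s^2 ≤ (m t)^2 := by
        rw [← sq_abs s]
        exact pow_le_pow_left₀ (abs_nonneg s) habs 2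
      have hX : ∑ j, (x t j)^2 ≤ R2 := by
        rw [hR2]; exact Finset.le_sup' (fun t => ∑ i, (x t i) ^ 2) ht
      have hXnn : (0:ℝ) ≤ ∑ j, (x t j)^2 := Finset.sum_nonneg fun j _ => sq_nonneg _
      have : s^2 * (∑ j, (x t j)^2) ≤ (m t)^2 * R2 :=
        mul_le_mul hs2 hX hXnn (sq_nonneg _)
      linarith
  -- telescoping induction
  have main : ∀ n, n ≤ T →
      γ * (∑ t ∈ Finset.Icc 1 n, m t) ≤ phiF K (w (n+1)) (θ (n+1)) ws θs ∧
      psiF K (w (n+1)) (θ (n+1)) ≤ ∑ t ∈ Finset.Icc 1 n, ((m t)^2 * R2 + m t) := by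
    intro n
    induction n with
    | zero =>
      intro _
      have hΦ1 : phiF K (w 1) (θ 1) ws θs = 0 := by
        unfold phiF dotp
        rw [hw1]
        simp [hθ1]
      have hΨ1 : psiF K (w 1) (θ 1) = 0 := by
        unfold psiF
        rw [hw1]
        simp [hθ1]
      simp [hΦ1, hΨ1]
    | succ n ih =>
      intro hn
      obtain ⟨ih1, ih2⟩ := ih (Nat.le_of_succ_le hn)
      have htm : n + 1 ∈ Finset.Icc 1 T := Finset.mem_Icc.mpr ⟨by omega, hn⟩
      obtain ⟨s1, s2⟩ := step (n+1) htm
      rw [Finset.sum_Icc_succ_top (by omega : 1 ≤ n + 1),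
          Finset.sum_Icc_succ_top (by omega : 1 ≤ n + 1)]
      constructor
      · rw [mul_add]; linarith
      · linarith
  obtain ⟨hΦfin, hΨfin⟩ := main T le_rfl
  set M : ℝ := ∑ t ∈ Finset.Icc 1 T, m t with hMdef
  have hMnn : 0 ≤ M := Finset.sum_nonneg fun t _ => hmnonneg t
  -- Cauchy-Schwarz
  have hCS : (phiF K (w (T+1)) (θ (T+1)) ws θs)^2 ≤ psiF K (w (T+1)) (θ (T+1)) := by
    have h := Finset.sum_mul_sq_le_sq_mul_sq
      ((Finset.univ : Finset (Fin d)).disjSum (Finset.Icc 1 (K-1)))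
      (Sum.elim (w (T+1)) (θ (T+1))) (Sum.elim ws θs)
    simp only [Finset.sum_disjSum, Sum.elim_inl, Sum.elim_inr] at h
    unfold phiF psiF dotp
    calc (∑ i, w (T+1) i * ws i + ∑ i ∈ Finset.Icc 1 (K-1), θ (T+1) i * θs i)^2
        ≤ ((∑ j, (w (T+1) j)^2) + ∑ i ∈ Finset.Icc 1 (K-1), (θ (T+1) i)^2)
          * ((∑ i, ws i ^ 2) + ∑ i ∈ Finset.Icc 1 (K-1), θs i ^ 2) := h
      _ = (∑ j, (w (T+1) j)^2) + ∑ i ∈ Finset.Icc 1 (K-1), (θ (T+1) i)^2 := by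
          rw [hnorm, mul_one]
  -- LMAE bound
  have hLMAE : ∑ t ∈ Finset.Icc 1 T, LMAE K (dotp (w t) (x t)) (θ t) (yl t) (yr t) ≤ M := by
    apply Finset.sum_le_sum
    intro t ht
    obtain ⟨hyl, hylr, hyrK⟩ := hy t ht
    exact lmae_le_mval K (yl t) (yr t) (x t) (w t) (θ t) hyl hylr hyrK
  have hγ2 : (0:ℝ) < γ^2 := pow_pos hγ 2
  have hKcnn : (0:ℝ) ≤ (K:ℝ) - (c:ℝ) - 1 := by
    rw [← hcast]; positivity
  rcases eq_or_lt_of_le hMnn with hM0 | hMpos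
  · -- M = 0
    have : ∑ t ∈ Finset.Icc 1 T, LMAE K (dotp (w t) (x t)) (θ t) (yl t) (yr t) ≤ 0 := by
      rw [← hM0] at hLMAE; exact hLMAE
    calc ∑ t ∈ Finset.Icc 1 T, LMAE K (dotp (w t) (x t)) (θ t) (yl t) (yr t)
        ≤ 0 := this
      _ ≤ (R2 + 1) * ((K : ℝ) - (c : ℝ) - 1) / γ ^ 2 :=
        div_nonneg (mul_nonneg (by linarith) hKcnn) (le_of_lt hγ2)
  · -- M > 0 : get a trial with a mistake, hence K - c - 1 ≥ 1
    obtain ⟨t0, ht0, hmt0⟩ : ∃ t0 ∈ Finset.Icc 1 T, 0 < m t0 := by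
      by_contra hcon
      push_neg at hcon
      have : M ≤ 0 := Finset.sum_nonpos fun t ht => hcon t ht
      linarith
    have hKc1 : (1:ℝ) ≤ (K:ℝ) - (c:ℝ) - 1 := by
      have h1 : (0:ℝ) < ((K - 1 - c : ℕ) : ℝ) := lt_of_lt_of_le hmt0 (hmle t0 ht0)
      have h2 : (1:ℕ) ≤ K - 1 - c := by exact_mod_cast Nat.cast_pos.mp h1
      rw [← hcast]
      exact_mod_cast h2
    have hΨle : psiF K (w (T+1)) (θ (T+1)) ≤ M * (((K:ℝ) - c - 1) * R2 + 1) := by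
      calc psiF K (w (T+1)) (θ (T+1))
          ≤ ∑ t ∈ Finset.Icc 1 T, ((m t)^2 * R2 + m t) := hΨfin
        _ ≤ ∑ t ∈ Finset.Icc 1 T, m t * (((K:ℝ) - c - 1) * R2 + 1) := by
            apply Finset.sum_le_sum
            intro t ht
            have h1 := hmle' t ht
            have h2 := hmnonneg t
            nlinarith [mul_nonneg (mul_nonneg h2 (by linarith : (0:ℝ) ≤ ((K:ℝ) - c - 1) - m t)) hR2nonneg]
        _ = M * (((K:ℝ) - c - 1) * R2 + 1) := by rw [hMdef, ← Finset.sum_mul]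
    have hΦnn : 0 ≤ γ * M := mul_nonneg (le_of_lt hγ) hMnn
    have hchain : (γ * M)^2 ≤ M * (((K:ℝ) - c - 1) * (R2 + 1)) := by
      have h1 : (γ * M)^2 ≤ (phiF K (w (T+1)) (θ (T+1)) ws θs)^2 :=
        pow_le_pow_left₀ hΦnn hΦfin 2
      have h2 : M * (((K:ℝ) - c - 1) * R2 + 1) ≤ M * (((K:ℝ) - c - 1) * (R2 + 1)) := by
        apply mul_le_mul_of_nonneg_left _ hMnn
        nlinarith [hR2nonneg]
      linarith
    have hMbound : M ≤ (R2 + 1) * ((K : ℝ) - (c : ℝ) - 1) / γ ^ 2 := by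
      rw [le_div_iff₀ hγ2]
      nlinarith [hchain, hMpos]
    linarith
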